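/- (Discrete Tchakaloff / Carathéodory cubature) Let x₁, …, x_M be points of a set X, let λ₁, …, λ_M ≥ 0 be weights, and let φ : X → ℝⁿ. Then there exist a subset S ⊆ {1, …, M} with |S| ≤ n + 1 and nonnegative weights (w_i)_{i ∈ S} with Σ_{i ∈ S} w_i = Σ_{j=1}^M λ_j such that Σ_{i ∈ S} w_i · φ(x_i) = Σ_{j=1}^M λ_j · φ(x_j); i.e., the integral of the vector-valued function φ against the discrete measure Σ λ_j δ_{x_j} is exactly reproduced by a cubature rule supported on at most n + 1 of the original points. -/

import Mathlib

/-- Discrete Tchakaloff / Carathéodory cubature: the integral of a vector-valued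
function `φ : X → ℝⁿ` against a discrete measure `Σⱼ λⱼ δ_{xⱼ}` is exactly reproduced
by a cubature rule with nonnegative weights supported on at most `n + 1` of the points. -/
theorem discrete_tchakaloff {X : Type*} (M n : ℕ)
    (x : Fin M → X) (lam : Fin M → ℝ) (hlam : ∀ j, 0 ≤ lam j)
    (φ : X → (Fin n → ℝ)) :
    ∃ (S : Finset (Fin M)) (w : Fin M → ℝ),
      S.card ≤ n + 1 ∧
      (∀ i ∈ S, 0 ≤ w i) ∧
      (∑ i ∈ S, w i) = (∑ j, lam j) ∧
      (∑ i ∈ S, w i • φ (x i)) = ∑ j, lam j • φ (x j) := by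
  set t : ℝ := ∑ j, lam j with ht
  rcases eq_or_lt_of_le (Finset.sum_nonneg fun j _ => hlam j) with h0 | hpos
  · -- all weights are zero
    have hz : ∀ j ∈ Finset.univ, lam j = 0 := by
      intro j hj
      exact (Finset.sum_eq_zero_iff_of_nonneg fun i _ => hlam i).mp h0.symm j hj
    refine ⟨∅, 0, by simp, by simp, by simpa using h0, ?_⟩
    simp only [Finset.sum_empty]
    exact (Finset.sum_eq_zero fun j hj => by rw [hz j hj, zero_smul]).symm
  · -- positive total mass: use Carathéodory
    set v : Fin n → ℝ := t⁻¹ • ∑ j, lam j • φ (x j) with hv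
    have hmem : v ∈ convexHull ℝ (Set.range fun j => φ (x j)) := by
      have := Finset.centerMass_mem_convexHull (Finset.univ)
        (fun j (_ : j ∈ Finset.univ) => hlam j) hpos
        (fun j (_ : j ∈ Finset.univ) => Set.mem_range_self (f := fun j => φ (x j)) j)
      rwa [Finset.centerMass] at this
    obtain ⟨ι, hι, z, w, hrange, hindep, hwpos, hwsum, hwz⟩ :=
      eq_pos_convex_span_of_mem_convexHull hmem
    -- card bound
    have hcard : Fintype.card ι ≤ n + 1 := by
      have h1 := hindep.card_le_finrank_succ
      have h2 : Module.finrank ℝ (vectorSpan ℝ (Set.range z)) ≤ n := by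
        have := Submodule.finrank_le (vectorSpan ℝ (Set.range z))
        simpa using this
      omega
    -- choose preimages
    have hchoice : ∀ i : ι, ∃ j : Fin M, φ (x j) = z i := fun i => hrange ⟨i, rfl⟩
    choose g hg using hchoice
    have hginj : Function.Injective g := by
      intro a b hab
      have := hindep.injective
      apply this
      rw [← hg a, ← hg b, hab]
    classical
    set S : Finset (Fin M) := Finset.univ.image g with hS
    set W : Fin M → ℝ := fun j => if h : ∃ i : ι, g i = j then t * w h.choose else 0 with hW
    have hWg : ∀ i : ι, W (g i) = t * w i := by
      intro i
      have hex : ∃ i' : ι, g i' = g i := ⟨i, rfl⟩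
      simp only [hW, dif_pos hex]
      rw [hginj hex.choose_spec]
    refine ⟨S, W, ?_, ?_, ?_, ?_⟩
    · calc S.card ≤ Fintype.card ι := Finset.card_image_le.trans (by simp)
        _ ≤ n + 1 := hcard
    · intro j hj
      obtain ⟨i, _, rfl⟩ := Finset.mem_image.mp hj
      rw [hWg i]
      exact mul_nonneg hpos.le (hwpos i).le
    · rw [hS, Finset.sum_image (fun a _ b _ h => hginj h)]
      simp only [hWg]
      rw [← Finset.mul_sum, hwsum, mul_one]
    · rw [hS, Finset.sum_image (fun a _ b _ h => hginj h)]
      have : (∑ i : ι, W (g i) • φ (x (g i))) = ∑ i : ι, (t * w i) • z i := by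
        refine Finset.sum_congr rfl fun i _ => by rw [hWg i, hg i]
      rw [this]
      have : (∑ i : ι, (t * w i) • z i) = t • ∑ i : ι, w i • z i := by
        rw [Finset.smul_sum]
        exact Finset.sum_congr rfl fun i _ => by rw [mul_smul]
      rw [this, hwz, hv, smul_smul, mul_inv_cancel₀ hpos.ne', one_smul]
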